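/- Let k ≥ 2 and let i₁, i₂, t be positive integers and η₁, η₂, ε > 0 constants. There exist η > 0 and an integer n₀, depending only on k, i₁, i₂, t, η₁, η₂ and ε, such that for every k-graph F on t vertices, every k-graph H on n ≥ n₀ vertices and all distinct vertices x, y ∈ V(H): if |Ñ_{F,i₁,η₁}(x) ∩ Ñ_{F,i₂,η₂}(y)| ≥ ε·n, then x is (F, i₁+i₂, η)-close to y. -/

import Mathlib

open Finset

/-- `A` is the vertex set of a copy of the hypergraph with vertex type `V` and edge set `EF`
inside the hypergraph on `Fin n` with edge set `E`. -/
def IsCopy {n : ℕ} {V : Type} [Fintype V] [DecidableEq V] (E : Finset (Finset (Fin n)))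
    (EF : Finset (Finset V)) (A : Finset (Fin n)) : Prop :=
  ∃ f : V ↪ Fin n, Finset.map f Finset.univ = A ∧ ∀ e ∈ EF, e.map f ∈ E

/-- The induced subhypergraph of `E` on `S` has an `F`-factor, where `F` has vertex type `V`
and edge set `EF`: there are pairwise vertex-disjoint copies of `F` covering exactly `S`. -/
def HasFactorOn {n : ℕ} {V : Type} [Fintype V] [DecidableEq V] (E : Finset (Finset (Fin n)))
    (EF : Finset (Finset V)) (S : Finset (Fin n)) : Prop :=
  ∃ P : Finset (Finset (Fin n)), (∀ A ∈ P, IsCopy E EF A) ∧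
    (P : Set (Finset (Fin n))).PairwiseDisjoint id ∧ P.biUnion id = S

/-- `x` is `(F, i, η)`-close to `y`. -/
def CloseTo {n : ℕ} {V : Type} [Fintype V] [DecidableEq V] (E : Finset (Finset (Fin n)))
    (EF : Finset (Finset V)) (i : ℕ) (η : ℝ) (x y : Fin n) : Prop :=
  η * (n : ℝ) ^ (i * Fintype.card V - 1) ≤
    (({S : Finset (Fin n) | S.card = i * Fintype.card V - 1 ∧ x ∉ S ∧ y ∉ S ∧
      HasFactorOn E EF (insert x S) ∧ HasFactorOn E EF (insert y S)}).ncard : ℝ)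

/-- `H` is `(F, i, η)`-closed. -/
def IsClosedGraph {n : ℕ} {V : Type} [Fintype V] [DecidableEq V] (E : Finset (Finset (Fin n)))
    (EF : Finset (Finset V)) (i : ℕ) (η : ℝ) : Prop :=
  ∀ x y : Fin n, x ≠ y → CloseTo E EF i η x y

/-- `Ñ_{F,i,η}(x)`: the set of vertices `(F, i, η)`-close to `x`. -/
def Ntilde {n : ℕ} {V : Type} [Fintype V] [DecidableEq V] (E : Finset (Finset (Fin n)))
    (EF : Finset (Finset V)) (i : ℕ) (η : ℝ) (x : Fin n) : Set (Fin n) :=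
  {y | CloseTo E EF i η x y}

/-- Degree of the set `T` in the `k`-graph with edge set `E`. -/
noncomputable def degOn {n : ℕ} (E : Finset (Finset (Fin n))) (k : ℕ) (T : Finset (Fin n)) : ℕ :=
  ({S : Finset (Fin n) | S.card = k - T.card ∧ Disjoint S T ∧ S ∪ T ∈ E}).ncard

/-- Edge set of the complete `k`-graph `K_t^k` on `Fin t`. -/
def cliqueEdges (t k : ℕ) : Finset (Finset (Fin t)) :=
  Finset.powersetCard k (Finset.univ : Finset (Fin t))

/-- Edge set of the complete `k`-partite `k`-graph `K_k^k(m)` with parts of size `m`. -/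
def multipartiteEdges (k m : ℕ) : Finset (Finset (Fin k × Fin m)) :=
  Finset.univ.filter (fun e : Finset (Fin k × Fin m) =>
    ∀ i : Fin k, (e.filter (fun v => v.1 = i)).card = 1)

lemma ncard_setOf_eq_filter_card {α : Type*} [Fintype α] (p : α → Prop) [DecidablePred p] :
    ({x | p x} : Set α).ncard = (Finset.univ.filter p).card := by
  rw [← Set.ncard_coe_finset]
  congr 1
  ext a
  simp

lemma hasFactorOn_union {n : ℕ} {V : Type} [Fintype V] [DecidableEq V]
    {E : Finset (Finset (Fin n))} {EF : Finset (Finset V)} {A B : Finset (Fin n)}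
    (h1 : HasFactorOn E EF A) (h2 : HasFactorOn E EF B) (hAB : Disjoint A B) :
    HasFactorOn E EF (A ∪ B) := by
  obtain ⟨P, hP, hPd, hPu⟩ := h1
  obtain ⟨Q, hQ, hQd, hQu⟩ := h2
  have key : ∀ c ∈ P, ∀ d ∈ Q, Disjoint (id c : Finset (Fin n)) (id d) := by
    intro c hc d hd
    have hcA : c ⊆ A := hPu ▸ Finset.subset_biUnion_of_mem id hc
    have hdB : d ⊆ B := hQu ▸ Finset.subset_biUnion_of_mem id hd
    exact Finset.disjoint_of_subset_left hcA (Finset.disjoint_of_subset_right hdB hAB)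
  refine ⟨P ∪ Q, ?_, ?_, ?_⟩
  · intro C hC
    rcases Finset.mem_union.1 hC with h | h
    · exact hP C h
    · exact hQ C h
  · intro a ha b hb hab
    simp only [Finset.coe_union, Set.mem_union, Finset.mem_coe] at ha hb
    rcases ha with ha | ha <;> rcases hb with hb | hb
    · exact hPd ha hb hab
    · exact key a ha b hb
    · exact (key b hb a ha).symm
    · exact hQd ha hb hab
  · ext a
    simp only [Finset.mem_biUnion, Finset.mem_union, id]
    constructor
    · rintro ⟨c, hc | hc, hac⟩
      · exact Or.inl (hPu ▸ Finset.mem_biUnion.2 ⟨c, hc, hac⟩)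
      · exact Or.inr (hQu ▸ Finset.mem_biUnion.2 ⟨c, hc, hac⟩)
    · rintro (h | h)
      · rw [← hPu] at h
        obtain ⟨c, hc, hac⟩ := Finset.mem_biUnion.1 h
        exact ⟨c, Or.inl hc, hac⟩
      · rw [← hQu] at h
        obtain ⟨c, hc, hac⟩ := Finset.mem_biUnion.1 h
        exact ⟨c, Or.inr hc, hac⟩

lemma card_filter_mem_le (n m : ℕ) (v : Fin n) :
    (Finset.univ.filter fun S : Finset (Fin n) => S.card = m ∧ v ∈ S).card ≤ m * n ^ (m - 1) := by
  classical
  rcases Nat.eq_zero_or_pos m with rfl | hm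
  · have h0 : (Finset.univ.filter fun S : Finset (Fin n) => S.card = 0 ∧ v ∈ S) = ∅ := by
      apply Finset.filter_eq_empty_iff.2
      rintro S _ ⟨h0, hv⟩
      rw [Finset.card_eq_zero] at h0
      subst h0
      exact Finset.notMem_empty v hv
    rw [h0, Finset.card_empty]
    exact Nat.zero_le _
  · calc (Finset.univ.filter fun S : Finset (Fin n) => S.card = m ∧ v ∈ S).card
        ≤ (Finset.powersetCard (m - 1) (Finset.univ : Finset (Fin n))).card := by
          apply Finset.card_le_card_of_injOn (fun S => S.erase v)
          · intro S hS
            simp only [Finset.mem_coe, Finset.mem_filter, Finset.mem_univ, true_and] at hS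
            rw [Finset.mem_coe, Finset.mem_powersetCard]
            exact ⟨Finset.subset_univ _, by rw [Finset.card_erase_of_mem hS.2, hS.1]⟩
          · intro S hS T hT hST
            simp only [Finset.coe_filter, Set.mem_setOf_eq, Finset.mem_univ, true_and] at hS hT
            have hST' : S.erase v = T.erase v := hST
            rw [← Finset.insert_erase hS.2, ← Finset.insert_erase hT.2, hST']
      _ = n.choose (m - 1) := by
          rw [Finset.card_powersetCard, Finset.card_univ, Fintype.card_fin]
      _ ≤ n ^ (m - 1) := Nat.choose_le_pow n (m - 1)
      _ ≤ m * n ^ (m - 1) := Nat.le_mul_of_pos_left _ hm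

lemma aux_small (c m n : ℕ) (η : ℝ) (hη : 0 < η) (hn1 : 1 ≤ n)
    (hn : 2 * (c : ℝ) * (m : ℝ) / η ≤ (n : ℝ)) :
    (c : ℝ) * ((m : ℝ) * (n : ℝ) ^ (m - 1)) ≤ η / 2 * (n : ℝ) ^ m := by
  have hnp : (0 : ℝ) < n := by exact_mod_cast hn1
  rcases Nat.eq_zero_or_pos m with rfl | hm
  · norm_num
    positivity
  · have hpow : (n : ℝ) ^ m = (n : ℝ) * (n : ℝ) ^ (m - 1) := by
      conv_lhs => rw [show m = (m - 1) + 1 by omega]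
      rw [pow_succ]
      ring
    rw [hpow]
    have h1 : (c : ℝ) * m ≤ η / 2 * n := by
      rw [div_le_iff₀ hη] at hn
      nlinarith
    have h2 : (0 : ℝ) ≤ (n : ℝ) ^ (m - 1) := by positivity
    calc (c : ℝ) * ((m : ℝ) * (n : ℝ) ^ (m - 1)) = ((c : ℝ) * m) * (n : ℝ) ^ (m - 1) := by ring
      _ ≤ (η / 2 * n) * (n : ℝ) ^ (m - 1) := mul_le_mul_of_nonneg_right h1 h2
      _ = η / 2 * ((n : ℝ) * (n : ℝ) ^ (m - 1)) := by ring

lemma good_filter_card {n m : ℕ} (p q : Finset (Fin n) → Prop) [DecidablePred p] [DecidablePred q]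
    (hp : ∀ S, p S → S.card = m) (W : Finset (Fin n))
    (hq : ∀ S, p S → (∀ v ∈ W, v ∉ S) → q S) :
    ((Finset.univ.filter p).card : ℝ) ≤
      ((Finset.univ.filter q).card : ℝ) + (W.card : ℝ) * ((m : ℝ) * (n : ℝ) ^ (m - 1)) := by
  classical
  have hsub : Finset.univ.filter p ⊆
      Finset.univ.filter q ∪
        W.biUnion (fun v => Finset.univ.filter fun S : Finset (Fin n) => S.card = m ∧ v ∈ S) := by
    intro S hS
    rw [Finset.mem_filter] at hS
    by_cases hW : ∀ v ∈ W, v ∉ S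
    · exact Finset.mem_union_left _ (Finset.mem_filter.2 ⟨Finset.mem_univ _, hq S hS.2 hW⟩)
    · push_neg at hW
      obtain ⟨v, hvW, hvS⟩ := hW
      exact Finset.mem_union_right _ (Finset.mem_biUnion.2
        ⟨v, hvW, Finset.mem_filter.2 ⟨Finset.mem_univ _, hp S hS.2, hvS⟩⟩)
  have hbi : (W.biUnion fun v =>
      Finset.univ.filter fun S : Finset (Fin n) => S.card = m ∧ v ∈ S).card
      ≤ W.card * (m * n ^ (m - 1)) := by
    calc _ ≤ ∑ v ∈ W, (Finset.univ.filter fun S : Finset (Fin n) => S.card = m ∧ v ∈ S).card :=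
          Finset.card_biUnion_le
      _ ≤ ∑ _v ∈ W, m * n ^ (m - 1) := Finset.sum_le_sum fun v _ => card_filter_mem_le n m v
      _ = W.card * (m * n ^ (m - 1)) := by rw [Finset.sum_const, smul_eq_mul]
  have h1 : (Finset.univ.filter p).card
      ≤ (Finset.univ.filter q).card + W.card * (m * n ^ (m - 1)) :=
    le_trans (Finset.card_le_card hsub) (le_trans (Finset.card_union_le _ _) (by omega))
  calc ((Finset.univ.filter p).card : ℝ)
      ≤ (((Finset.univ.filter q).card + W.card * (m * n ^ (m - 1)) : ℕ) : ℝ) := by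
        exact_mod_cast h1
    _ = _ := by push_cast; ring

set_option maxHeartbeats 2000000 in
/-- Additivity of closeness: if the closed neighbourhoods of `x` and `y` have large
intersection, then `x` is `(F, i₁+i₂, η)`-close to `y`. -/
theorem close_additive (k i₁ i₂ t : ℕ) (η₁ η₂ ε : ℝ)
    (hk : 2 ≤ k) (hi₁ : 1 ≤ i₁) (hi₂ : 1 ≤ i₂) (ht : 1 ≤ t)
    (hη₁ : 0 < η₁) (hη₂ : 0 < η₂) (hε : 0 < ε) :
    ∃ η : ℝ, 0 < η ∧ ∃ n₀ : ℕ, ∀ n : ℕ, n₀ ≤ n →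
      ∀ EF : Finset (Finset (Fin t)), (∀ e ∈ EF, e.card = k) →
      ∀ E : Finset (Finset (Fin n)), (∀ e ∈ E, e.card = k) →
      ∀ x y : Fin n, x ≠ y →
      ε * (n : ℝ) ≤ ((Ntilde E EF i₁ η₁ x ∩ Ntilde E EF i₂ η₂ y).ncard : ℝ) →
      CloseTo E EF (i₁ + i₂) η x y := by
  classical
  have hit₁ : 1 ≤ i₁ * t := Nat.one_le_iff_ne_zero.2 (by positivity)
  have hit₂ : 1 ≤ i₂ * t := Nat.one_le_iff_ne_zero.2 (by positivity)
  set e₁ : ℕ := i₁ * t - 1 with he₁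
  set e₂ : ℕ := i₂ * t - 1 with he₂
  set e : ℕ := (i₁ + i₂) * t - 1 with he
  have hee : e = e₁ + e₂ + 1 := by
    rw [he, he₁, he₂]
    have : (i₁ + i₂) * t = i₁ * t + i₂ * t := by ring
    omega
  set C : ℕ := e * 2 ^ e with hCdef
  have hCpos : 0 < C := by
    have h1 : 1 ≤ e := by omega
    have h2 : 0 < 2 ^ e := Nat.pow_pos (by norm_num)
    exact Nat.mul_pos h1 h2
  have hCpos' : (0 : ℝ) < (C : ℝ) := by exact_mod_cast hCpos
  refine ⟨ε * η₁ * η₂ / (8 * (C : ℝ)), by positivity,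
    ⌈4 / ε⌉₊ + ⌈2 * (e₁ : ℝ) / η₁⌉₊ + ⌈2 * ((e₁ : ℝ) + 1) * (e₂ : ℝ) / η₂⌉₊ + 1, ?_⟩
  intro n hn EF hEF E hE x y hxy hZ
  -- basic numeric facts about n
  have hn1 : 1 ≤ n := by omega
  have hnR : (1 : ℝ) ≤ (n : ℝ) := by exact_mod_cast hn1
  have hnε : (4 : ℝ) / ε ≤ (n : ℝ) := by
    have h1 : ⌈4 / ε⌉₊ ≤ n := by omega
    exact le_trans (Nat.le_ceil _) (by exact_mod_cast h1)
  have hnA : 2 * (e₁ : ℝ) / η₁ ≤ (n : ℝ) := by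
    have h1 : ⌈2 * (e₁ : ℝ) / η₁⌉₊ ≤ n := by omega
    exact le_trans (Nat.le_ceil _) (by exact_mod_cast h1)
  have hnB : 2 * ((e₁ : ℝ) + 1) * (e₂ : ℝ) / η₂ ≤ (n : ℝ) := by
    have h1 : ⌈2 * ((e₁ : ℝ) + 1) * (e₂ : ℝ) / η₂⌉₊ ≤ n := by omega
    exact le_trans (Nat.le_ceil _) (by exact_mod_cast h1)
  have hεn4 : (4 : ℝ) ≤ ε * n := by
    rw [div_le_iff₀ hε] at hnε
    linarith
  -- rewrite the goal
  rw [CloseTo]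
  simp only [Fintype.card_fin]
  rw [show (i₁ + i₂) * t - 1 = e from he.symm, ncard_setOf_eq_filter_card]
  set Sfin := Finset.univ.filter (fun S : Finset (Fin n) => S.card = e ∧ x ∉ S ∧ y ∉ S ∧
    HasFactorOn E EF (insert x S) ∧ HasFactorOn E EF (insert y S)) with hSfindef
  -- the set of common neighbours
  set Zs : Set (Fin n) := Ntilde E EF i₁ η₁ x ∩ Ntilde E EF i₂ η₂ y with hZsdef
  rw [Set.ncard_eq_toFinset_card Zs Zs.toFinite] at hZ
  set Z : Finset (Fin n) := Zs.toFinite.toFinset with hZdef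
  set Z' : Finset (Fin n) := Z \ {x, y} with hZ'def
  have hZ'card : ε * n - 2 ≤ (Z'.card : ℝ) := by
    have hsub : Z ⊆ Z' ∪ {x, y} := by
      intro a ha
      by_cases h : a ∈ ({x, y} : Finset (Fin n))
      · exact Finset.mem_union_right _ h
      · exact Finset.mem_union_left _ (Finset.mem_sdiff.2 ⟨ha, h⟩)
    have h1 : Z.card ≤ Z'.card + 2 :=
      calc Z.card ≤ (Z' ∪ {x, y}).card := Finset.card_le_card hsub
        _ ≤ Z'.card + ({x, y} : Finset (Fin n)).card := Finset.card_union_le _ _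
        _ ≤ Z'.card + 2 := by
            have := Finset.card_insert_le x ({y} : Finset (Fin n))
            simp only [Finset.card_singleton] at this
            omega
    have h1' : (Z.card : ℝ) ≤ (Z'.card : ℝ) + 2 := by exact_mod_cast h1
    linarith
  have hzmem : ∀ z ∈ Z', z ≠ x ∧ z ≠ y ∧ CloseTo E EF i₁ η₁ x z ∧ CloseTo E EF i₂ η₂ y z := by
    intro z hz
    rw [hZ'def, Finset.mem_sdiff] at hz
    obtain ⟨hzZ, hznot⟩ := hz
    rw [hZdef, Set.Finite.mem_toFinset] at hzZ
    simp only [Finset.mem_insert, Finset.mem_singleton] at hznot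
    push_neg at hznot
    exact ⟨hznot.1, hznot.2, hzZ.1, hzZ.2⟩
  -- the families A and B
  set A : Fin n → Finset (Finset (Fin n)) := fun z =>
    Finset.univ.filter (fun S : Finset (Fin n) => S.card = e₁ ∧ x ∉ S ∧ z ∉ S ∧
      HasFactorOn E EF (insert x S) ∧ HasFactorOn E EF (insert z S) ∧ y ∉ S) with hAdef
  set B : Fin n → Finset (Fin n) → Finset (Finset (Fin n)) := fun z S₁ =>
    Finset.univ.filter (fun S : Finset (Fin n) => S.card = e₂ ∧ y ∉ S ∧ z ∉ S ∧
      HasFactorOn E EF (insert y S) ∧ HasFactorOn E EF (insert z S) ∧ x ∉ S ∧ Disjoint S S₁)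
    with hBdef
  have hA : ∀ z ∈ Z', η₁ / 2 * (n : ℝ) ^ e₁ ≤ ((A z).card : ℝ) := by
    intro z hz
    obtain ⟨hzx, hzy, hcx, _⟩ := hzmem z hz
    rw [CloseTo] at hcx
    simp only [Fintype.card_fin] at hcx
    rw [show i₁ * t - 1 = e₁ from he₁.symm, ncard_setOf_eq_filter_card] at hcx
    have hgood := good_filter_card
      (p := fun S : Finset (Fin n) => S.card = e₁ ∧ x ∉ S ∧ z ∉ S ∧
        HasFactorOn E EF (insert x S) ∧ HasFactorOn E EF (insert z S))
      (q := fun S : Finset (Fin n) => S.card = e₁ ∧ x ∉ S ∧ z ∉ S ∧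
        HasFactorOn E EF (insert x S) ∧ HasFactorOn E EF (insert z S) ∧ y ∉ S)
      (fun S hS => hS.1) ({y} : Finset (Fin n))
      (fun S hS hW => ⟨hS.1, hS.2.1, hS.2.2.1, hS.2.2.2.1, hS.2.2.2.2,
        hW y (Finset.mem_singleton_self y)⟩)
    simp only [Finset.card_singleton, Nat.cast_one, one_mul] at hgood
    have hsmall := aux_small 1 e₁ n η₁ hη₁ hn1 (by push_cast; linarith)
    push_cast at hsmall
    simp only [hAdef]
    linarith
  have hB : ∀ z ∈ Z', ∀ S₁ ∈ A z, η₂ / 2 * (n : ℝ) ^ e₂ ≤ ((B z S₁).card : ℝ) := by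
    intro z hz S₁ hS₁
    obtain ⟨hzx, hzy, _, hcy⟩ := hzmem z hz
    have hS₁c : S₁.card = e₁ := by
      simp only [hAdef, Finset.mem_filter] at hS₁
      exact hS₁.2.1
    rw [CloseTo] at hcy
    simp only [Fintype.card_fin] at hcy
    rw [show i₂ * t - 1 = e₂ from he₂.symm, ncard_setOf_eq_filter_card] at hcy
    have hgood := good_filter_card
      (p := fun S : Finset (Fin n) => S.card = e₂ ∧ y ∉ S ∧ z ∉ S ∧
        HasFactorOn E EF (insert y S) ∧ HasFactorOn E EF (insert z S))
      (q := fun S : Finset (Fin n) => S.card = e₂ ∧ y ∉ S ∧ z ∉ S ∧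
        HasFactorOn E EF (insert y S) ∧ HasFactorOn E EF (insert z S) ∧ x ∉ S ∧ Disjoint S S₁)
      (fun S hS => hS.1) (insert x S₁)
      (fun S hS hW => ⟨hS.1, hS.2.1, hS.2.2.1, hS.2.2.2.1, hS.2.2.2.2,
        hW x (Finset.mem_insert_self _ _),
        Finset.disjoint_left.2 fun a haS haS₁ => hW a (Finset.mem_insert_of_mem haS₁) haS⟩)
    have hWcard : ((insert x S₁).card : ℝ) ≤ (e₁ : ℝ) + 1 := by
      have h1 : (insert x S₁).card ≤ e₁ + 1 := by
        have := Finset.card_insert_le x S₁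
        omega
      exact_mod_cast h1
    have hmul : ((insert x S₁).card : ℝ) * ((e₂ : ℝ) * (n : ℝ) ^ (e₂ - 1))
        ≤ ((e₁ : ℝ) + 1) * ((e₂ : ℝ) * (n : ℝ) ^ (e₂ - 1)) :=
      mul_le_mul_of_nonneg_right hWcard (by positivity)
    have hsmall := aux_small (e₁ + 1) e₂ n η₂ hη₂ hn1 (by push_cast; linarith)
    push_cast at hsmall
    simp only [hBdef]
    linarith
  -- the triple family
  set T : Finset ((_ : Fin n) × (_ : Finset (Fin n)) × Finset (Fin n)) :=
    Z'.sigma (fun z => (A z).sigma (fun S₁ => B z S₁)) with hTdef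
  have hmemT : ∀ σ : (_ : Fin n) × (_ : Finset (Fin n)) × Finset (Fin n), σ ∈ T →
      σ.1 ∈ Z' ∧ σ.2.1 ∈ A σ.1 ∧ σ.2.2 ∈ B σ.1 σ.2.1 := by
    rintro ⟨z, S₁, S₂⟩ hσ
    rw [hTdef] at hσ
    simp only [Finset.mem_sigma] at hσ
    exact ⟨hσ.1, hσ.2.1, hσ.2.2⟩
  have hfacts : ∀ z S₁ S₂,
      (⟨z, S₁, S₂⟩ : (_ : Fin n) × (_ : Finset (Fin n)) × Finset (Fin n)) ∈ T →
      (z ≠ x ∧ z ≠ y) ∧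
      (S₁.card = e₁ ∧ x ∉ S₁ ∧ z ∉ S₁ ∧ HasFactorOn E EF (insert x S₁) ∧
        HasFactorOn E EF (insert z S₁) ∧ y ∉ S₁) ∧
      (S₂.card = e₂ ∧ y ∉ S₂ ∧ z ∉ S₂ ∧ HasFactorOn E EF (insert y S₂) ∧
        HasFactorOn E EF (insert z S₂) ∧ x ∉ S₂ ∧ Disjoint S₂ S₁) := by
    intro z S₁ S₂ hσ
    obtain ⟨hz, hS₁, hS₂⟩ := hmemT _ hσ
    obtain ⟨hzx, hzy, _, _⟩ := hzmem z hz
    simp only [hAdef, Finset.mem_filter, Finset.mem_univ, true_and] at hS₁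
    simp only [hBdef, Finset.mem_filter, Finset.mem_univ, true_and] at hS₂
    exact ⟨⟨hzx, hzy⟩, hS₁, hS₂⟩
  -- lower bound on the size of T
  have hTlow : (ε / 2 * n) * ((η₁ / 2 * (n : ℝ) ^ e₁) * (η₂ / 2 * (n : ℝ) ^ e₂))
      ≤ (T.card : ℝ) := by
    have hcardT : (T.card : ℝ) = ∑ z ∈ Z', (((A z).sigma fun S₁ => B z S₁).card : ℝ) := by
      rw [hTdef, Finset.card_sigma]
      push_cast
      rfl
    rw [hcardT]
    have hinner : ∀ z ∈ Z', (η₁ / 2 * (n : ℝ) ^ e₁) * (η₂ / 2 * (n : ℝ) ^ e₂)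
        ≤ (((A z).sigma fun S₁ => B z S₁).card : ℝ) := by
      intro z hz
      have h1 : (((A z).sigma fun S₁ => B z S₁).card : ℝ) = ∑ S₁ ∈ A z, ((B z S₁).card : ℝ) := by
        rw [Finset.card_sigma]
        push_cast
        rfl
      rw [h1]
      have h2 := Finset.card_nsmul_le_sum (A z) (fun S₁ => ((B z S₁).card : ℝ))
        (η₂ / 2 * (n : ℝ) ^ e₂) (fun S₁ hS₁ => hB z hz S₁ hS₁)
      rw [nsmul_eq_mul] at h2
      have h3 := hA z hz
      have h4 : (0 : ℝ) ≤ η₂ / 2 * (n : ℝ) ^ e₂ := by positivity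
      calc (η₁ / 2 * (n : ℝ) ^ e₁) * (η₂ / 2 * (n : ℝ) ^ e₂)
          ≤ ((A z).card : ℝ) * (η₂ / 2 * (n : ℝ) ^ e₂) := mul_le_mul_of_nonneg_right h3 h4
        _ ≤ _ := h2
    have h5 := Finset.card_nsmul_le_sum Z'
      (fun z => (((A z).sigma fun S₁ => B z S₁).card : ℝ))
      ((η₁ / 2 * (n : ℝ) ^ e₁) * (η₂ / 2 * (n : ℝ) ^ e₂)) hinner
    rw [nsmul_eq_mul] at h5
    have h6 : (0 : ℝ) ≤ (η₁ / 2 * (n : ℝ) ^ e₁) * (η₂ / 2 * (n : ℝ) ^ e₂) := by positivity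
    have h7 : ε / 2 * n ≤ (Z'.card : ℝ) := by linarith
    calc (ε / 2 * n) * ((η₁ / 2 * (n : ℝ) ^ e₁) * (η₂ / 2 * (n : ℝ) ^ e₂))
        ≤ (Z'.card : ℝ) * ((η₁ / 2 * (n : ℝ) ^ e₁) * (η₂ / 2 * (n : ℝ) ^ e₂)) :=
          mul_le_mul_of_nonneg_right h7 h6
      _ ≤ _ := h5
  -- the gluing map
  set f : ((_ : Fin n) × (_ : Finset (Fin n)) × Finset (Fin n)) → Finset (Fin n) :=
    fun σ => insert σ.1 (σ.2.1 ∪ σ.2.2) with hfdef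
  have hmaps : ∀ σ ∈ T, f σ ∈ Sfin := by
    rintro ⟨z, S₁, S₂⟩ hσ
    obtain ⟨⟨hzx, hzy⟩, ⟨hc₁, hxS₁, hzS₁, hfx₁, hfz₁, hyS₁⟩,
      ⟨hc₂, hyS₂, hzS₂, hfy₂, hfz₂, hxS₂, hd⟩⟩ := hfacts z S₁ S₂ hσ
    have hd' : Disjoint S₁ S₂ := hd.symm
    have hzU : z ∉ S₁ ∪ S₂ := by simp [hzS₁, hzS₂]
    simp only [hSfindef, hfdef, Finset.mem_filter, Finset.mem_univ, true_and]
    refine ⟨?_, ?_, ?_, ?_, ?_⟩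
    · rw [Finset.card_insert_of_notMem hzU, Finset.card_union_of_disjoint hd', hc₁, hc₂]
      omega
    · simp only [Finset.mem_insert, Finset.mem_union]
      push_neg
      exact ⟨Ne.symm hzx, hxS₁, hxS₂⟩
    · simp only [Finset.mem_insert, Finset.mem_union]
      push_neg
      exact ⟨Ne.symm hzy, hyS₁, hyS₂⟩
    · have hset : insert x (insert z (S₁ ∪ S₂)) = (insert x S₁) ∪ (insert z S₂) := by
        ext a
        simp only [Finset.mem_insert, Finset.mem_union]
        tauto
      rw [hset]
      refine hasFactorOn_union hfx₁ hfz₂ ?_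
      rw [Finset.disjoint_left]
      intro a ha hb
      simp only [Finset.mem_insert] at ha hb
      rcases ha with rfl | ha
      · rcases hb with hb | hb
        · exact hzx hb.symm
        · exact hxS₂ hb
      · rcases hb with rfl | hb
        · exact hzS₁ ha
        · exact Finset.disjoint_left.1 hd' ha hb
    · have hset : insert y (insert z (S₁ ∪ S₂)) = (insert y S₂) ∪ (insert z S₁) := by
        ext a
        simp only [Finset.mem_insert, Finset.mem_union]
        tauto
      rw [hset]
      refine hasFactorOn_union hfy₂ hfz₁ ?_
      rw [Finset.disjoint_left]
      intro a ha hb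
      simp only [Finset.mem_insert] at ha hb
      rcases ha with rfl | ha
      · rcases hb with hb | hb
        · exact hzy hb.symm
        · exact hyS₁ hb
      · rcases hb with rfl | hb
        · exact hzS₂ ha
        · exact Finset.disjoint_left.1 hd ha hb
  -- fibers of the gluing map are small
  have hfiber : ∀ Sv ∈ T.image f, (T.filter (fun σ => f σ = Sv)).card ≤ C := by
    intro Sv hSv
    obtain ⟨σ₀, hσ₀T, hσ₀⟩ := Finset.mem_image.1 hSv
    have hSvcard : Sv.card = e := by
      have h1 := hmaps σ₀ hσ₀T
      rw [hσ₀, hSfindef, Finset.mem_filter] at h1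
      exact h1.2.1
    have key : ∀ z S₁ S₂,
        (⟨z, S₁, S₂⟩ : (_ : Fin n) × (_ : Finset (Fin n)) × Finset (Fin n)) ∈ T →
        f ⟨z, S₁, S₂⟩ = Sv → S₂ = Sv \ insert z S₁ := by
      intro z S₁ S₂ hT'' hf''
      obtain ⟨_, ⟨_, _, _, _, _, _⟩, ⟨_, _, hzS₂, _, _, _, hdisj⟩⟩ := hfacts z S₁ S₂ hT''
      simp only [hfdef] at hf''
      ext a
      simp only [Finset.mem_sdiff, Finset.mem_insert, ← hf'', Finset.mem_union]
      constructor
      · intro ha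
        refine ⟨Or.inr (Or.inr ha), ?_⟩
        push_neg
        exact ⟨fun h => hzS₂ (h ▸ ha), fun h => (Finset.disjoint_left.1 hdisj ha) h⟩
      · rintro ⟨h1, h2⟩
        push_neg at h2
        rcases h1 with rfl | h1 | h1
        · exact absurd rfl h2.1
        · exact absurd h1 h2.2
        · exact h1
    calc (T.filter (fun σ => f σ = Sv)).card
        ≤ (Sv ×ˢ Sv.powerset).card := by
          apply Finset.card_le_card_of_injOn (fun σ => (σ.1, σ.2.1))
          · rintro ⟨z, S₁, S₂⟩ hσ
            rw [Finset.mem_coe, Finset.mem_filter] at hσ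
            obtain ⟨hσT, hfσ⟩ := hσ
            rw [Finset.mem_coe, Finset.mem_product, Finset.mem_powerset]
            simp only [hfdef] at hfσ
            constructor
            · rw [← hfσ]
              exact Finset.mem_insert_self _ _
            · rw [← hfσ]
              exact fun a ha => Finset.mem_insert_of_mem (Finset.mem_union_left _ ha)
          · rintro ⟨z, S₁, S₂⟩ ha ⟨z', S₁', S₂'⟩ hb hab
            simp only [Finset.coe_filter, Set.mem_setOf_eq] at ha hb
            simp only [Prod.mk.injEq] at hab
            obtain ⟨rfl, rfl⟩ := hab
            have h1 := key z S₁ S₂ ha.1 ha.2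
            have h2 := key z S₁ S₂' hb.1 hb.2
            simp [h1, h2]
      _ ≤ C := by
          rw [Finset.card_product, Finset.card_powerset, hSvcard, hCdef]
  -- upper bound on T via the image
  have hTle : T.card ≤ C * Sfin.card := by
    calc T.card ≤ C * (T.image f).card := Finset.card_le_mul_card_image T C hfiber
      _ ≤ C * Sfin.card := by
          apply Nat.mul_le_mul_left
          apply Finset.card_le_card
          intro Sv hSv
          obtain ⟨σ, hσ, hσ'⟩ := Finset.mem_image.1 hSv
          exact hσ' ▸ hmaps σ hσ
  -- put everything together
  have hTle' : (T.card : ℝ) ≤ (C : ℝ) * (Sfin.card : ℝ) := by exact_mod_cast hTle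
  have hprod : (ε / 2 * n) * ((η₁ / 2 * (n : ℝ) ^ e₁) * (η₂ / 2 * (n : ℝ) ^ e₂))
      = ε * η₁ * η₂ / 8 * (n : ℝ) ^ e := by
    rw [hee]
    ring
  have hchain : ε * η₁ * η₂ / 8 * (n : ℝ) ^ e ≤ (C : ℝ) * (Sfin.card : ℝ) := by
    rw [← hprod]
    exact le_trans hTlow hTle'
  have h8C : (0 : ℝ) < 8 * (C : ℝ) := by positivity
  rw [div_mul_eq_mul_div, div_le_iff₀ h8C]
  nlinarith [hchain]
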